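/- arXiv:2502.16011 — 2 statements merged into one kernel-verified Lean document; each statement's English description precedes it below -/
import Mathlib

section
/- Lefschetz zeta function of a cyclic permutative map on a wedge sum: in the cyclic algebraic model, the identity ((1 − t)·ζ_f(t))^s = (1 − t^s)^s · ∏_{i=1}^s ζ_{f_ii^s}(t^s) holds in the ring ℚ[[t]] of formal power series (this is the paper's formula ζ_f(t) = ((1−t^s)/(1−t)) · (∏_{i=1}^s ζ_{f_ii^s}(t^s))^{1/s}, with both sides raised to the power s). -/
/-- The exponential `exp(f) = ∑_{j ≥ 0} f^j / j!` of a formal power series `f ∈ ℚ[[t]]`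
(intended for series with zero constant term). -/
noncomputable def expPS (f : PowerSeries ℚ) : PowerSeries ℚ :=
  PowerSeries.mk fun n =>
    PowerSeries.coeff n (∑ j ∈ Finset.range (n + 1), (j.factorial : ℚ)⁻¹ • f ^ j)

/-- The Lefschetz zeta function `ζ(t) = exp(∑_{m ≥ 1} L(m)·t^m/m) ∈ ℚ[[t]]` of a sequence of
Lefschetz numbers `L : ℕ → ℚ`. -/
noncomputable def lefschetzZeta (L : ℕ → ℚ) : PowerSeries ℚ :=
  expPS (PowerSeries.mk fun m => if m = 0 then 0 else L m / (m : ℚ))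

/-- Substitution of `t^d` for `t` in a formal power series `g(t) ∈ ℚ[[t]]`: the series
`g(t^d)`. -/
noncomputable def substPow (d : ℕ) (g : PowerSeries ℚ) : PowerSeries ℚ :=
  PowerSeries.mk fun n => if d ∣ n then PowerSeries.coeff (n / d) g else 0

open PowerSeries

private lemma coeff_pow_zero_of_lt {f : ℚ⟦X⟧} (hf : constantCoeff f = 0)
    {n j : ℕ} (h : n < j) : coeff n (f ^ j) = 0 := by
  have : (X : ℚ⟦X⟧) ^ j ∣ f ^ j := pow_dvd_pow_of_dvd (X_dvd_iff.2 hf) j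
  exact X_pow_dvd_iff.1 this n h

private lemma coeff_expPS_trunc {f : ℚ⟦X⟧} (hf : constantCoeff f = 0)
    {n M : ℕ} (h : n < M) :
    coeff n (expPS f) = coeff n (∑ j ∈ Finset.range M, (j.factorial : ℚ)⁻¹ • f ^ j) := by
  rw [expPS, coeff_mk, map_sum, map_sum]
  apply Finset.sum_subset
  · exact Finset.range_subset_range.2 h
  · intro j hj hj'
    simp only [Finset.mem_range, not_lt] at hj'
    rw [map_smul, coeff_pow_zero_of_lt hf (by omega), smul_zero]

private lemma constantCoeff_expPS (f : ℚ⟦X⟧) :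
    constantCoeff (expPS f) = 1 := by
  rw [← coeff_zero_eq_constantCoeff_apply, expPS, coeff_mk]
  simp

private lemma expPS_zero : expPS 0 = 1 := by
  ext n
  rw [expPS, coeff_mk]
  congr 1
  rw [Finset.sum_eq_single 0]
  · simp
  · intro j _ hj; simp [zero_pow hj]
  · simp

private lemma derivative_expPS {f : ℚ⟦X⟧} (hf : constantCoeff f = 0) :
    d⁄dX ℚ (expPS f) = d⁄dX ℚ f * expPS f := by
  ext n
  have hT : d⁄dX ℚ (∑ j ∈ Finset.range (n + 2), (j.factorial : ℚ)⁻¹ • f ^ j)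
      = (∑ j ∈ Finset.range (n + 1), (j.factorial : ℚ)⁻¹ • f ^ j) * d⁄dX ℚ f := by
    rw [map_sum]
    have hterm : ∀ j, d⁄dX ℚ ((j.factorial : ℚ)⁻¹ • f ^ j)
        = (j.factorial : ℚ)⁻¹ • d⁄dX ℚ (f ^ j) := fun j => Derivation.map_smul _ _ _
    simp only [hterm]
    rw [Finset.sum_range_succ']
    have h0 : (((0:ℕ).factorial : ℚ))⁻¹ • d⁄dX ℚ (f ^ 0) = 0 := by
      simp [pow_zero]
    rw [h0, add_zero, Finset.sum_mul]
    apply Finset.sum_congr rfl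
    intro i _
    rw [Derivation.leibniz_pow]
    simp only [Nat.add_sub_cancel, smul_eq_mul]
    rw [smul_mul_assoc]
    rw [← Nat.cast_smul_eq_nsmul ℚ (i+1), smul_smul]
    congr 1
    rw [Nat.factorial_succ]
    push_cast
    rw [mul_inv]
    field_simp
  have h1 : coeff n (d⁄dX ℚ (expPS f)) = coeff n (d⁄dX ℚ (∑ j ∈ Finset.range (n + 2), (j.factorial : ℚ)⁻¹ • f ^ j)) := by
    rw [coeff_derivative, coeff_derivative,
      coeff_expPS_trunc hf (Nat.lt_succ_self (n + 1))]
  rw [h1, hT, mul_comm _ (d⁄dX ℚ f), coeff_mul, coeff_mul]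
  apply Finset.sum_congr rfl
  intro p hp
  rw [Finset.HasAntidiagonal.mem_antidiagonal] at hp
  congr 1
  exact (coeff_expPS_trunc hf (show p.2 < n + 1 by omega)).symm

private lemma eq_of_logDeriv_eq {P Q : ℚ⟦X⟧}
    (h0 : constantCoeff P = constantCoeff Q)
    (hQ : constantCoeff Q ≠ 0)
    (h : d⁄dX ℚ P * Q = d⁄dX ℚ Q * P) : P = Q := by
  ext n
  induction n using Nat.strong_induction_on with
  | _ n ih =>
    match n with
    | 0 => simpa [coeff_zero_eq_constantCoeff] using h0
    | (n + 1) =>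
      have hc := congrArg (coeff n) h
      rw [coeff_mul, coeff_mul, Finset.Nat.sum_antidiagonal_eq_sum_range_succ_mk,
        Finset.Nat.sum_antidiagonal_eq_sum_range_succ_mk, Finset.sum_range_succ,
        Finset.sum_range_succ] at hc
      have heq : ∀ k ∈ Finset.range n,
          coeff k (d⁄dX ℚ P) * coeff (n - k) Q
            = coeff k (d⁄dX ℚ Q) * coeff (n - k) P := by
        intro k hk
        rw [Finset.mem_range] at hk
        rw [coeff_derivative, coeff_derivative, ih (k + 1) (by omega), ih (n - k) (by omega)]
      rw [Finset.sum_congr rfl heq] at hc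
      have hc2 := add_left_cancel hc
      rw [Nat.sub_self, coeff_derivative, coeff_derivative,
        coeff_zero_eq_constantCoeff, ← h0] at hc2
      have hP0 : constantCoeff P ≠ 0 := by rwa [h0]
      have : coeff (n + 1) P * (↑n + 1) = coeff (n + 1) Q * (↑n + 1) := by
        exact mul_right_cancel₀ hP0 hc2
      exact mul_right_cancel₀ (by positivity) this

private lemma expPS_add {f g : ℚ⟦X⟧} (hf : constantCoeff f = 0)
    (hg : constantCoeff g = 0) : expPS (f + g) = expPS f * expPS g := by
  have hfg : constantCoeff (f + g) = 0 := by rw [map_add, hf, hg, add_zero]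
  apply eq_of_logDeriv_eq
  · rw [constantCoeff_expPS, map_mul, constantCoeff_expPS, constantCoeff_expPS]
    norm_num
  · rw [map_mul, constantCoeff_expPS, constantCoeff_expPS]
    norm_num
  · have hD : d⁄dX ℚ (expPS f * expPS g)
        = (d⁄dX ℚ f + d⁄dX ℚ g) * (expPS f * expPS g) := by
      rw [Derivation.leibniz, smul_eq_mul, smul_eq_mul, derivative_expPS hf,
        derivative_expPS hg]
      ring
    rw [hD, derivative_expPS hfg, map_add]
    ring

private lemma expPS_sum {ι : Type*} (t : Finset ι) (f : ι → ℚ⟦X⟧)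
    (hf : ∀ i ∈ t, constantCoeff (f i) = 0) :
    expPS (∑ i ∈ t, f i) = ∏ i ∈ t, expPS (f i) := by
  induction t using Finset.cons_induction with
  | empty => simpa using expPS_zero
  | cons a t ha ih =>
    rw [Finset.sum_cons, Finset.prod_cons, expPS_add (hf a (Finset.mem_cons_self a t))
      (by rw [map_sum]; exact Finset.sum_eq_zero fun i hi => hf i (Finset.mem_cons_of_mem hi)),
      ih fun i hi => hf i (Finset.mem_cons_of_mem hi)]

private lemma expPS_pow {f : ℚ⟦X⟧} (hf : constantCoeff f = 0) (n : ℕ) :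
    expPS f ^ n = expPS (n • f) := by
  induction n with
  | zero => simpa using expPS_zero.symm
  | succ n ih =>
    rw [pow_succ, ih, succ_nsmul, expPS_add (by rw [map_nsmul, hf, smul_zero]) hf]

/-- the log of 1/(1-X) with a minus sign -/
noncomputable def psLog : ℚ⟦X⟧ := PowerSeries.mk fun n => if n = 0 then 0 else -(n : ℚ)⁻¹

private lemma constantCoeff_psLog : constantCoeff psLog = 0 := by
  rw [← coeff_zero_eq_constantCoeff_apply, psLog, coeff_mk, if_pos rfl]

private lemma derivative_psLog : d⁄dX ℚ psLog = -(PowerSeries.mk fun _ => (1 : ℚ)) := by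
  ext n
  rw [coeff_derivative, psLog, coeff_mk, if_neg (Nat.succ_ne_zero n), map_neg, coeff_mk]
  push_cast
  field_simp

private lemma ones_mul_one_sub_X : (PowerSeries.mk fun _ => (1 : ℚ)) * (1 - X) = 1 := by
  ext n
  rw [mul_sub, mul_one, map_sub]
  match n with
  | 0 => simp
  | (n + 1) => simp [coeff_succ_mul_X, coeff_mk]

private lemma one_sub_X_eq : (1 - X : ℚ⟦X⟧) = expPS psLog := by
  apply eq_of_logDeriv_eq
  · rw [constantCoeff_expPS, map_sub, map_one, constantCoeff_X, sub_zero]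
  · rw [constantCoeff_expPS]; norm_num
  · rw [derivative_expPS constantCoeff_psLog, derivative_psLog, map_sub, derivative_X]
    have : d⁄dX ℚ (1 : ℚ⟦X⟧) = 0 := by
      simpa using (Derivation.map_one_eq_zero (d⁄dX ℚ))
    rw [this, zero_sub]
    calc (-1 : ℚ⟦X⟧) * expPS psLog
        = -((PowerSeries.mk fun _ => (1:ℚ)) * (1 - X)) * expPS psLog := by
          rw [ones_mul_one_sub_X]
      _ = -(PowerSeries.mk fun _ => (1:ℚ)) * expPS psLog * (1 - X) := by ring

private lemma substPow_smul (d : ℕ) (c : ℚ) (g : ℚ⟦X⟧) :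
    substPow d (c • g) = c • substPow d g := by
  ext n
  simp only [substPow, coeff_mk, map_smul, smul_eq_mul, mul_ite, mul_zero]

private lemma substPow_sum {ι : Type*} (d : ℕ) (t : Finset ι) (f : ι → ℚ⟦X⟧) :
    substPow d (∑ i ∈ t, f i) = ∑ i ∈ t, substPow d (f i) := by
  ext n
  simp only [substPow, coeff_mk, map_sum]
  split_ifs with h
  · rfl
  · rw [eq_comm, Finset.sum_eq_zero]; intro i _; rfl

private lemma constantCoeff_substPow (d : ℕ) {g : ℚ⟦X⟧} (hg : constantCoeff g = 0) :
    constantCoeff (substPow d g) = 0 := by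
  rw [← coeff_zero_eq_constantCoeff_apply, substPow, coeff_mk, if_pos (dvd_zero d),
    Nat.zero_div, coeff_zero_eq_constantCoeff_apply, hg]

private lemma substPow_one {d : ℕ} (hd : 1 ≤ d) : substPow d 1 = 1 := by
  ext n
  rw [substPow, coeff_mk]
  by_cases h : d ∣ n
  · rw [if_pos h]
    obtain ⟨m, rfl⟩ := h
    rw [Nat.mul_div_cancel_left m (by omega)]
    rcases Nat.eq_zero_or_pos m with rfl | hm
    · simp
    · rw [coeff_one, coeff_one, if_neg (by omega), if_neg (by positivity)]
  · rw [if_neg h, coeff_one, if_neg (by rintro rfl; exact h (dvd_zero d))]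

private lemma substPow_mul {d : ℕ} (hd : 1 ≤ d) (f g : ℚ⟦X⟧) :
    substPow d (f * g) = substPow d f * substPow d g := by
  ext n
  rw [coeff_mul, Finset.Nat.sum_antidiagonal_eq_sum_range_succ_mk]
  simp only [substPow, coeff_mk]
  by_cases h : d ∣ n
  · obtain ⟨m, rfl⟩ := h
    rw [if_pos ⟨m, rfl⟩, coeff_mul, Finset.Nat.sum_antidiagonal_eq_sum_range_succ_mk]
    have hterm : ∀ k ∈ Finset.range (d * m + 1),
        (if d ∣ k then coeff (k / d) f else 0) *
          (if d ∣ (d * m - k) then coeff ((d * m - k) / d) g else 0)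
        = if d ∣ k then coeff (k / d) f * coeff ((d * m - k) / d) g else 0 := by
      intro k hk
      by_cases hdk : d ∣ k
      · rw [if_pos hdk, if_pos hdk, if_pos (Nat.dvd_sub (Dvd.intro m rfl) hdk)]
      · rw [if_neg hdk, if_neg hdk, zero_mul]
    rw [Finset.sum_congr rfl hterm, ← Finset.sum_filter,
      Nat.mul_div_cancel_left m (show 0 < d by omega)]
    apply Finset.sum_nbij' (fun k => d * k) (fun k => k / d)
    · intro a ha
      rw [Finset.mem_range] at ha
      simp only [Finset.mem_filter, Finset.mem_range]
      exact ⟨by nlinarith, Dvd.intro a rfl⟩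
    · intro a ha
      simp only [Finset.mem_filter, Finset.mem_range] at ha
      rw [Finset.mem_range]
      obtain ⟨hlt, b, rfl⟩ := ha
      rw [Nat.mul_div_cancel_left b (show 0 < d by omega)]
      by_contra hb
      nlinarith [Nat.le_of_not_lt hb]
    · intro a _
      exact Nat.mul_div_cancel_left a (show 0 < d by omega)
    · intro a ha
      simp only [Finset.mem_filter] at ha
      exact Nat.mul_div_cancel' ha.2 |>.symm ▸ Nat.div_mul_cancel ha.2 |>.symm ▸
        (Nat.mul_div_cancel' ha.2)
    · intro a ha
      rw [Finset.mem_range] at ha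
      rw [Nat.mul_div_cancel_left a (show 0 < d by omega)]
      congr 2
      have h2 : d * m - d * a = d * (m - a) := by
        rw [Nat.mul_sub]
      rw [h2, Nat.mul_div_cancel_left _ (show 0 < d by omega)]
  · rw [if_neg h, eq_comm, Finset.sum_eq_zero]
    intro k hk
    rw [Finset.mem_range] at hk
    by_cases hdk : d ∣ k
    · rw [if_neg (fun hc : d ∣ n - k => h (by
        have hnk : n = k + (n - k) := by omega
        rw [hnk]; exact Nat.dvd_add hdk hc)), mul_zero]
    · rw [if_neg hdk, zero_mul]

private lemma substPow_pow {d : ℕ} (hd : 1 ≤ d) (g : ℚ⟦X⟧) (j : ℕ) :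
    substPow d (g ^ j) = substPow d g ^ j := by
  induction j with
  | zero => simpa using substPow_one hd
  | succ j ih => rw [pow_succ, substPow_mul hd, ih, pow_succ]

private lemma substPow_expPS {d : ℕ} (hd : 1 ≤ d) {g : ℚ⟦X⟧}
    (hg : constantCoeff g = 0) :
    substPow d (expPS g) = expPS (substPow d g) := by
  ext n
  have hR : coeff n (expPS (substPow d g))
      = coeff n (substPow d (∑ j ∈ Finset.range (n + 1), (j.factorial : ℚ)⁻¹ • g ^ j)) := by
    rw [expPS, coeff_mk, substPow_sum]
    congr 1
    apply Finset.sum_congr rfl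
    intro j _
    rw [substPow_smul, substPow_pow hd]
  rw [hR, substPow, substPow, coeff_mk, coeff_mk]
  by_cases h : d ∣ n
  · rw [if_pos h, if_pos h, coeff_expPS_trunc hg (Nat.lt_succ_of_le (Nat.div_le_self n d))]
  · rw [if_neg h, if_neg h]

private lemma substPow_one_sub_X {d : ℕ} (hd : 1 ≤ d) :
    substPow d (1 - X) = 1 - X ^ d := by
  ext n
  rw [substPow, coeff_mk, map_sub, map_sub, coeff_one, coeff_one, coeff_X_pow]
  by_cases h : d ∣ n
  · rw [if_pos h]
    obtain ⟨m, rfl⟩ := h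
    rw [Nat.mul_div_cancel_left m (show 0 < d by omega), coeff_X]
    rcases Nat.eq_zero_or_pos m with rfl | hm
    · rw [if_pos rfl, if_neg (by omega), if_pos (Nat.mul_zero d), if_neg (by
        rw [Nat.mul_zero]; omega)]
    · rcases eq_or_ne m 1 with rfl | hm1
      · rw [if_neg (by omega), if_pos rfl, if_neg (by rw [Nat.mul_one]; omega),
          if_pos (Nat.mul_one d)]
      · rw [if_neg (by omega), if_neg hm1,
          if_neg (Nat.mul_ne_zero (by omega) (by omega)),
          if_neg (by intro hc; exact hm1 (by nlinarith))]
  · rw [if_neg h, if_neg (by rintro rfl; exact h (dvd_zero d)),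
      if_neg (by rintro rfl; exact h dvd_rfl), sub_zero]

section TracePart

variable {s N : ℕ} {V : Fin s → Fin N → Type*}
  [∀ i k, AddCommGroup (V i k)] [∀ i k, Module ℚ (V i k)]
  [∀ i k, FiniteDimensional ℚ (V i k)]

private lemma sum_single_eq (k : Fin N) (x : Π i, V i k) :
    ∑ i, Pi.single i (x i) = x := by
  funext j
  rw [Finset.sum_apply]
  simp [Pi.single_apply]

private lemma trace_block_sum (k : Fin N) (G : (Π i, V i k) →ₗ[ℚ] (Π i, V i k)) :
    LinearMap.trace ℚ _ G
      = ∑ i, LinearMap.trace ℚ (V i k)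
          ((LinearMap.proj i) ∘ₗ G ∘ₗ (LinearMap.single ℚ (fun j => V j k) i)) := by
  have hG : G = ∑ i, G ∘ₗ ((LinearMap.single ℚ (fun j => V j k) i) ∘ₗ
      (LinearMap.proj (φ := fun j => V j k) i)) := by
    apply LinearMap.ext; intro x
    rw [LinearMap.sum_apply]
    simp only [LinearMap.comp_apply, LinearMap.proj_apply, LinearMap.coe_single]
    rw [← map_sum, sum_single_eq]
  conv_lhs => rw [hG]
  rw [map_sum]
  apply Finset.sum_congr rfl
  intro i _
  exact LinearMap.trace_comp_comm' (LinearMap.proj i)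
    (G ∘ₗ LinearMap.single ℚ (fun j => V j k) i)

end TracePart


/-- **Lefschetz zeta function of a cyclic permutative squared-by-blocks map on a wedge sum.**
In the cyclic algebraic model (see the hypotheses: `σ` a single `s`-cycle, `F k` the
block-permutation endomorphism of `⊕_i V i k` built from the maps `A i k : V i k → V (σ i) k`),
with Lefschetz numbers `L m = 1 + ∑_{k=1}^N (-1)^k tr(F_k^m)` and coordinate Lefschetz numbers
`Lc i m = 1 + ∑_{k=1}^N (-1)^k tr(π_{i,k} ∘ F_k^m ∘ ι_{i,k})`, the zeta function
`ζ_f(t) = exp(∑_{m≥1} L(f^m) t^m/m)` satisfies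
`((1 − t)·ζ_f(t))^s = (1 − t^s)^s · ∏_{i=1}^s ζ_{f_ii^s}(t^s)` in `ℚ[[t]]`, where
`ζ_{f_ii^s}(t^s)` is `exp(∑_{m≥1} L(f_ii^{sm}) t^m/m)` with `t^s` substituted for `t`. -/
theorem stmt5 (s N : ℕ) (hs : 1 ≤ s) (hN : 1 ≤ N)
    (σ : Equiv.Perm (Fin s))
    (hσ : ∀ (i : Fin s) (m : ℕ), (σ ^ m) i = i ↔ s ∣ m)
    (V : Fin s → Fin N → Type*)
    [∀ i k, AddCommGroup (V i k)] [∀ i k, Module ℚ (V i k)]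
    [∀ i k, FiniteDimensional ℚ (V i k)]
    (hdim : ∀ (i i' : Fin s) (k : Fin N),
      Module.finrank ℚ (V i k) = Module.finrank ℚ (V i' k))
    (A : ∀ i k, V i k →ₗ[ℚ] V (σ i) k)
    (F : ∀ k, (Π i, V i k) →ₗ[ℚ] (Π i, V i k))
    (hF : ∀ k (i : Fin s) (v : V i k), F k (Pi.single i v) = Pi.single (σ i) (A i k v))
    (L : ℕ → ℚ)
    (hL : ∀ m, L m =
      1 + ∑ k : Fin N, (-1 : ℚ) ^ ((k : ℕ) + 1) *
        LinearMap.trace ℚ (Π i, V i k) ((F k) ^ m))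
    (Lc : Fin s → ℕ → ℚ)
    (hLc : ∀ i m, Lc i m =
      1 + ∑ k : Fin N, (-1 : ℚ) ^ ((k : ℕ) + 1) *
        LinearMap.trace ℚ (V i k)
          ((LinearMap.proj i) ∘ₗ ((F k) ^ m) ∘ₗ (LinearMap.single ℚ (fun j => V j k) i))) :
    ((1 - PowerSeries.X) * lefschetzZeta L) ^ s =
      (1 - PowerSeries.X ^ s) ^ s *
        ∏ i : Fin s, substPow s (lefschetzZeta (fun m => Lc i (s * m))) := by
  -- Step 1: support of powers of F on single blocks
  have hsupp : ∀ (k : Fin N) (m : ℕ) (i : Fin s) (v : V i k) (j : Fin s),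
      j ≠ (σ ^ m) i → ((F k) ^ m) (Pi.single i v) j = 0 := by
    intro k m
    induction m with
    | zero =>
      intro i v j hj
      rw [pow_zero, Equiv.Perm.one_apply] at hj
      rw [pow_zero, Module.End.one_apply]
      rw [Pi.single_eq_of_ne hj]
    | succ m ih =>
      intro i v j hj
      rw [pow_succ, Equiv.Perm.mul_apply] at hj
      rw [pow_succ, Module.End.mul_apply, hF k i v]
      exact ih (σ i) (A i k v) j hj
  -- Step 2: diagonal blocks vanish when s ∤ m
  have hdiag0 : ∀ (k : Fin N) (i : Fin s) (m : ℕ), ¬ s ∣ m →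
      (LinearMap.proj i) ∘ₗ ((F k) ^ m) ∘ₗ (LinearMap.single ℚ (fun j => V j k) i) = 0 := by
    intro k i m hm
    apply LinearMap.ext
    intro v
    simp only [LinearMap.comp_apply, LinearMap.coe_single, LinearMap.proj_apply,
      LinearMap.zero_apply]
    exact hsupp k m i v i (fun h => hm ((hσ i m).1 h.symm))
  -- Step 3: L m = 1 when s ∤ m
  have hL1 : ∀ m, ¬ s ∣ m → L m = 1 := by
    intro m hm
    rw [hL m]
    have : ∀ k : Fin N, LinearMap.trace ℚ (Π i, V i k) ((F k) ^ m) = 0 := by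
      intro k
      rw [trace_block_sum]
      apply Finset.sum_eq_zero
      intro i _
      rw [hdiag0 k i m hm, map_zero]
    simp [this]
  -- Step 4: sum of coordinate Lefschetz numbers
  have hLcsum : ∀ m, ∑ i, Lc i m = (s : ℚ) - 1 + L m := by
    intro m
    simp only [hLc]
    rw [Finset.sum_add_distrib, Finset.sum_const, Finset.card_univ, Fintype.card_fin,
      Finset.sum_comm]
    have hk : ∀ k : Fin N, ∑ i, (-1 : ℚ) ^ ((k : ℕ) + 1) *
        LinearMap.trace ℚ (V i k)
          ((LinearMap.proj i) ∘ₗ ((F k) ^ m) ∘ₗ (LinearMap.single ℚ (fun j => V j k) i))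
        = (-1 : ℚ) ^ ((k : ℕ) + 1) * LinearMap.trace ℚ (Π i, V i k) ((F k) ^ m) := by
      intro k
      rw [← Finset.mul_sum, ← trace_block_sum]
    rw [Finset.sum_congr rfl fun k _ => hk k]
    have := hL m
    rw [nsmul_eq_mul, mul_one]
    linarith
  -- abbreviations
  set gL : ℚ⟦X⟧ := PowerSeries.mk fun m => if m = 0 then 0 else L m / (m : ℚ) with hgLdef
  set gc : Fin s → ℚ⟦X⟧ := fun i =>
    PowerSeries.mk fun m => if m = 0 then 0 else Lc i (s * m) / (m : ℚ) with hgcdef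
  have hgL0 : constantCoeff gL = 0 := by
    rw [← coeff_zero_eq_constantCoeff_apply, hgLdef, coeff_mk, if_pos rfl]
  have hgc0 : ∀ i, constantCoeff (gc i) = 0 := by
    intro i
    rw [← coeff_zero_eq_constantCoeff_apply, hgcdef, coeff_mk, if_pos rfl]
  have hzL : lefschetzZeta L = expPS gL := rfl
  have hzc : ∀ i, lefschetzZeta (fun m => Lc i (s * m)) = expPS (gc i) := fun i => rfl
  -- key coefficient identity
  have key : s • (psLog + gL) = s • substPow s psLog + ∑ i : Fin s, substPow s (gc i) := by
    ext n
    have hco : ∀ x : ℚ⟦X⟧, coeff n (s • x) = (s : ℚ) * coeff n x := by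
      intro x
      rw [map_nsmul, nsmul_eq_mul]
    rw [map_add, hco, map_add (coeff n), hco, map_sum]
    simp only [psLog, hgLdef, hgcdef, substPow, coeff_mk]
    rcases eq_or_ne n 0 with rfl | hn0
    · simp
    · by_cases hdvd : s ∣ n
      · obtain ⟨m, rfl⟩ := hdvd
        have hm0 : m ≠ 0 := by rintro rfl; exact hn0 (Nat.mul_zero s)
        have hsm : s * m / s = m := Nat.mul_div_cancel_left m (by omega)
        rw [if_neg hn0, if_neg hn0, if_pos ⟨m, rfl⟩, hsm, if_neg hm0]
        have hterm : ∀ i : Fin s, (if s ∣ s * m then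
            (if m = 0 then (0:ℚ) else Lc i (s * m) / (m : ℚ))
            else 0) = Lc i (s * m) / (m : ℚ) := by
          intro i
          rw [if_pos ⟨m, rfl⟩, if_neg hm0]
        rw [Finset.sum_congr rfl fun i _ => hterm i, ← Finset.sum_div, hLcsum (s * m)]
        have hmQ : ((m : ℚ)) ≠ 0 := Nat.cast_ne_zero.2 hm0
        have hsQ : ((s : ℚ)) ≠ 0 := Nat.cast_ne_zero.2 (by omega)
        have hnQ : (((s * m : ℕ) : ℚ)) ≠ 0 := Nat.cast_ne_zero.2 (by positivity)
        push_cast at hnQ ⊢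
        field_simp
        ring
      · rw [if_neg hn0, if_neg hn0, if_neg hdvd, hL1 n hdvd]
        rw [Finset.sum_eq_zero fun i _ => if_neg hdvd]
        field_simp
        ring
  -- endgame
  rw [hzL, one_sub_X_eq, ← expPS_add constantCoeff_psLog hgL0,
    expPS_pow (by rw [map_add, constantCoeff_psLog, hgL0, add_zero]) s,
    ← substPow_one_sub_X hs, one_sub_X_eq, substPow_expPS hs constantCoeff_psLog,
    expPS_pow (constantCoeff_substPow s constantCoeff_psLog) s]
  have hprod : ∏ i : Fin s, substPow s (lefschetzZeta (fun m => Lc i (s * m)))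
      = expPS (∑ i : Fin s, substPow s (gc i)) := by
    rw [expPS_sum Finset.univ _ (fun i _ => constantCoeff_substPow s (hgc0 i))]
    apply Finset.prod_congr rfl
    intro i _
    rw [hzc i, substPow_expPS hs (hgc0 i)]
  rw [hprod, ← expPS_add (by rw [map_nsmul, constantCoeff_substPow s constantCoeff_psLog,
      smul_zero])
    (by rw [map_sum]; exact Finset.sum_eq_zero fun i _ => constantCoeff_substPow s (hgc0 i)),
    key]
end

section
/- Dold coefficients of a permutative squared-by-blocks map on a wedge sum: in the permutative algebraic model, for every m > 1 one has ℓ(f^m) = ∑_{j=1}^q 𝟙_{s_j}(m) · (∑_{i∈Λ_j} ℓ(f_ii^m)), where 𝟙_{s_j}(m) = 1 if s_j divides m and 𝟙_{s_j}(m) = 0 otherwise; moreover ℓ(f^1) = L(f^1). -/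
open Module

lemma trace_pi {ι : Type*} [Fintype ι] [DecidableEq ι] (M : ι → Type*)
    [∀ i, AddCommGroup (M i)] [∀ i, Module ℚ (M i)] [∀ i, FiniteDimensional ℚ (M i)]
    (f : (Π i, M i) →ₗ[ℚ] (Π i, M i)) :
    LinearMap.trace ℚ (Π i, M i) f
      = ∑ i, LinearMap.trace ℚ (M i)
          ((LinearMap.proj i) ∘ₗ f ∘ₗ (LinearMap.single ℚ M i)) := by
  classical
  let b : ∀ i, Basis (Fin (Module.finrank ℚ (M i))) ℚ (M i) := fun i => Module.finBasis ℚ (M i)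
  rw [LinearMap.trace_eq_matrix_trace ℚ (Pi.basis b) f, Matrix.trace,
    ← Finset.univ_sigma_univ, Finset.sum_sigma]
  refine Finset.sum_congr rfl fun i _ => ?_
  rw [LinearMap.trace_eq_matrix_trace ℚ (b i), Matrix.trace]
  refine Finset.sum_congr rfl fun x _ => ?_
  simp [Matrix.diag, LinearMap.toMatrix_apply, Pi.basis_apply, b]

lemma Fpow_single {s : ℕ} (σ : Equiv.Perm (Fin s)) (W : Fin s → Type*)
    [∀ i, AddCommGroup (W i)] [∀ i, Module ℚ (W i)]
    (A : ∀ i, W i →ₗ[ℚ] W (σ i)) (F : (Π i, W i) →ₗ[ℚ] (Π i, W i))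
    (hF : ∀ (i : Fin s) (v : W i), F (Pi.single i v) = Pi.single (σ i) (A i v)) :
    ∀ (r : ℕ) (i : Fin s) (v : W i), ∃ w : W ((σ ^ r) i),
      (F ^ r) (Pi.single i v) = Pi.single ((σ ^ r) i) w := by
  intro r
  induction r with
  | zero =>
    intro i v
    have h : (σ ^ 0) i = i := by simp
    rw [h]
    exact ⟨v, by simp⟩
  | succ r ih =>
    intro i v
    obtain ⟨w, hw⟩ := ih i v
    have h : (σ ^ (r + 1)) i = σ ((σ ^ r) i) := by
      rw [pow_succ']; rfl
    rw [h]
    exact ⟨A _ w, by rw [pow_succ', Module.End.mul_apply, hw, hF]⟩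

lemma perm_pow_fixed {n : ℕ} (σ : Equiv.Perm (Fin n)) (i : Fin n) (r : ℕ) :
    (σ ^ r) i = i ↔ Function.minimalPeriod σ i ∣ r := by
  rw [← Function.isPeriodicPt_iff_minimalPeriod_dvd]
  show _ ↔ (⇑σ)^[r] i = i
  rw [← Equiv.Perm.coe_pow]

lemma perm_minimalPeriod_pos {n : ℕ} (σ : Equiv.Perm (Fin n)) (i : Fin n) :
    0 < Function.minimalPeriod σ i := by
  refine Function.IsPeriodicPt.minimalPeriod_pos (orderOf_pos σ) ?_
  show (⇑σ)^[orderOf σ] i = i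
  rw [← Equiv.Perm.coe_pow, pow_orderOf_eq_one]; rfl

lemma orbit_card {n : ℕ} (σ : Equiv.Perm (Fin n)) (i : Fin n) (Λj : Finset (Fin n))
    (horb : ∀ i', i' ∈ Λj ↔ ∃ m : ℕ, (σ ^ m) i = i') :
    Λj.card = Function.minimalPeriod σ i := by
  have hT := perm_minimalPeriod_pos σ i
  have hΛ : Λj = (Finset.range (Function.minimalPeriod σ i)).image (fun m => (σ ^ m) i) := by
    ext i'
    rw [horb, Finset.mem_image]
    constructor
    · rintro ⟨m, rfl⟩
      refine ⟨m % Function.minimalPeriod σ i, Finset.mem_range.mpr (Nat.mod_lt _ hT), ?_⟩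
      show (σ ^ (m % Function.minimalPeriod σ i)) i = (σ ^ m) i
      rw [Equiv.Perm.coe_pow, Equiv.Perm.coe_pow]
      exact Function.iterate_mod_minimalPeriod_eq
    · rintro ⟨m, _, rfl⟩
      exact ⟨m, rfl⟩
  rw [hΛ, Finset.card_image_of_injOn, Finset.card_range]
  have h2 : (fun m => (σ ^ m) i) = fun m => (⇑σ)^[m] i := by
    funext m; rw [Equiv.Perm.coe_pow]
  rw [h2, Finset.coe_range]
  exact Function.iterate_injOn_Iio_minimalPeriod

lemma moebius_div_sum {m : ℕ} (hm1 : m ≠ 1) :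
    ∑ r ∈ m.divisors, ((ArithmeticFunction.moebius (m / r) : ℤ) : ℚ) = 0 := by
  have h : ∑ r ∈ m.divisors, (ArithmeticFunction.moebius (m / r)) = 0 := by
    rw [Nat.sum_div_divisors]
    have h2 := ArithmeticFunction.coe_mul_zeta_apply
      (f := ArithmeticFunction.moebius) (x := m)
    rw [← h2, ArithmeticFunction.moebius_mul_coe_zeta]
    exact ArithmeticFunction.one_apply_ne hm1
  have := congrArg (fun z : ℤ => (z : ℚ)) h
  push_cast at this
  simpa using this


/-- **Dold coefficients of a permutative squared-by-blocks map on a wedge sum.**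
In the permutative algebraic model (`σ` a permutation of `{1,…,s}` with orbits
`Λ 1, …, Λ q` of cardinalities `s₁,…,s_q`; `F k` the block-permutation endomorphism of
`⊕_i V i k` built from the maps `A i k : V i k → V (σ i) k`), with Lefschetz numbers
`L m = 1 + ∑_{k=1}^N (-1)^k tr(F_k^m)`,
`Lc i m = 1 + ∑_{k=1}^N (-1)^k tr(π_{i,k} ∘ F_k^m ∘ ι_{i,k})` and Dold coefficients
`ℓ(f^m) = ∑_{r∣m} μ(m/r)·L(f^r)`, `ℓ(f_ii^m) = ∑_{r∣m} μ(m/r)·L(f_ii^r)`: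
for every `m > 1`, `ℓ(f^m) = ∑_{j=1}^q 𝟙_{s_j}(m)·(∑_{i∈Λ_j} ℓ(f_ii^m))` (with
`𝟙_{s_j}(m) = 1` if `s_j ∣ m` and `0` otherwise), and moreover `ℓ(f^1) = L(f^1)`. -/
theorem stmt10 (s N q : ℕ) (hs : 1 ≤ s) (hN : 1 ≤ N)
(σ : Equiv.Perm (Fin s))
    (Λ : Fin q → Finset (Fin s))
    (hΛorb : ∀ j, ∀ i ∈ Λ j, ∀ i', i' ∈ Λ j ↔ ∃ m : ℕ, (σ ^ m) i = i')
    (hΛne : ∀ j, (Λ j).Nonempty)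
    (hΛcover : ∀ i, ∃ j, i ∈ Λ j)
    (hΛdisj : ∀ j j', j ≠ j' → Disjoint (Λ j) (Λ j'))
    (sVec : Fin q → ℕ) (hsVec : ∀ j, sVec j = (Λ j).card)
    (V : Fin s → Fin N → Type*)
    [∀ i k, AddCommGroup (V i k)] [∀ i k, Module ℚ (V i k)]
    [∀ i k, FiniteDimensional ℚ (V i k)]
    (hdim : ∀ (k : Fin N) (i i' : Fin s), (∃ m : ℕ, (σ ^ m) i = i') →
      Module.finrank ℚ (V i k) = Module.finrank ℚ (V i' k))
    (A : ∀ i k, V i k →ₗ[ℚ] V (σ i) k)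
    (F : ∀ k, (Π i, V i k) →ₗ[ℚ] (Π i, V i k))
    (hF : ∀ k (i : Fin s) (v : V i k), F k (Pi.single i v) = Pi.single (σ i) (A i k v))
    (L : ℕ → ℚ)
    (hL : ∀ m, L m =
      1 + ∑ k : Fin N, (-1 : ℚ) ^ ((k : ℕ) + 1) *
        LinearMap.trace ℚ (Π i, V i k) ((F k) ^ m))
    (Lc : Fin s → ℕ → ℚ)
    (hLc : ∀ i m, Lc i m =
      1 + ∑ k : Fin N, (-1 : ℚ) ^ ((k : ℕ) + 1) *
        LinearMap.trace ℚ (V i k)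
          ((LinearMap.proj i) ∘ₗ ((F k) ^ m) ∘ₗ (LinearMap.single ℚ (fun j => V j k) i)))
    (ℓ : ℕ → ℚ)
    (hℓ : ∀ m, ℓ m = ∑ r ∈ m.divisors, ((ArithmeticFunction.moebius (m / r) : ℤ) : ℚ) * L r)
    (ℓc : Fin s → ℕ → ℚ)
    (hℓc : ∀ i m, ℓc i m =
      ∑ r ∈ m.divisors, ((ArithmeticFunction.moebius (m / r) : ℤ) : ℚ) * Lc i r) :
    (∀ m, 1 < m → ℓ m =
      ∑ j : Fin q, (if sVec j ∣ m then (1 : ℚ) else 0) * (∑ i ∈ Λ j, ℓc i m)) ∧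
    ℓ 1 = L 1 := by
  classical
  -- Lc i r = 1 when the orbit does not come back
  have hLc1 : ∀ (i : Fin s) (r : ℕ), (σ ^ r) i ≠ i → Lc i r = 1 := by
    intro i r h
    rw [hLc]
    have hz : ∀ k : Fin N,
        (LinearMap.proj i) ∘ₗ ((F k) ^ r) ∘ₗ (LinearMap.single ℚ (fun j => V j k) i) = 0 := by
      intro k
      apply LinearMap.ext; intro v
      obtain ⟨w, hw⟩ := Fpow_single σ (fun j => V j k) (fun j => A j k) (F k) (hF k) r i v
      simp only [LinearMap.comp_apply, LinearMap.single_apply, LinearMap.proj_apply,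
        LinearMap.zero_apply, hw]
      exact Pi.single_eq_of_ne (M := fun j => V j k) (Ne.symm h) w
    simp [hz]
  -- trace decomposition
  have key : ∀ r, L r = 1 + ∑ i : Fin s, (Lc i r - 1) := by
    intro r
    rw [hL]
    congr 1
    calc ∑ k : Fin N, (-1 : ℚ) ^ ((k : ℕ) + 1) *
          LinearMap.trace ℚ (Π i, V i k) ((F k) ^ r)
        = ∑ k : Fin N, ∑ i : Fin s, (-1 : ℚ) ^ ((k : ℕ) + 1) *
            LinearMap.trace ℚ (V i k)
              ((LinearMap.proj i) ∘ₗ ((F k) ^ r) ∘ₗ (LinearMap.single ℚ (fun j => V j k) i)) := by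
          refine Finset.sum_congr rfl fun k _ => ?_
          rw [trace_pi (fun j => V j k) ((F k) ^ r), Finset.mul_sum]
      _ = ∑ i : Fin s, ∑ k : Fin N, (-1 : ℚ) ^ ((k : ℕ) + 1) *
            LinearMap.trace ℚ (V i k)
              ((LinearMap.proj i) ∘ₗ ((F k) ^ r) ∘ₗ (LinearMap.single ℚ (fun j => V j k) i)) :=
          Finset.sum_comm
      _ = ∑ i : Fin s, (Lc i r - 1) := by
          refine Finset.sum_congr rfl fun i _ => ?_
          rw [hLc]; ring
  refine ⟨?_, ?_⟩
  · intro m hm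
    have hm1 : m ≠ 1 := by omega
    have Z := moebius_div_sum hm1
    -- ℓc via (Lc - 1)
    have hℓc' : ∀ i, ℓc i m =
        ∑ r ∈ m.divisors, ((ArithmeticFunction.moebius (m / r) : ℤ) : ℚ) * (Lc i r - 1) := by
      intro i
      rw [hℓc]
      rw [show (∑ r ∈ m.divisors,
          ((ArithmeticFunction.moebius (m / r) : ℤ) : ℚ) * (Lc i r - 1))
        = ∑ r ∈ m.divisors, (((ArithmeticFunction.moebius (m / r) : ℤ) : ℚ) * Lc i r
          - ((ArithmeticFunction.moebius (m / r) : ℤ) : ℚ)) from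
          Finset.sum_congr rfl fun r _ => by ring]
      rw [Finset.sum_sub_distrib, Z, sub_zero]
    -- ℓ m = ∑ i, ℓc i m
    have hmain : ℓ m = ∑ i : Fin s, ℓc i m := by
      rw [hℓ]
      rw [show (∑ r ∈ m.divisors, ((ArithmeticFunction.moebius (m / r) : ℤ) : ℚ) * L r)
        = ∑ r ∈ m.divisors, (((ArithmeticFunction.moebius (m / r) : ℤ) : ℚ)
          + ∑ i : Fin s, ((ArithmeticFunction.moebius (m / r) : ℤ) : ℚ) * (Lc i r - 1)) from
        Finset.sum_congr rfl fun r _ => by rw [key r, mul_add, mul_one, Finset.mul_sum]]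
      rw [Finset.sum_add_distrib, Z, zero_add, Finset.sum_comm]
      exact Finset.sum_congr rfl fun i _ => (hℓc' i).symm
    -- vanishing for orbits not dividing m
    have hvan : ∀ j : Fin q, ¬ sVec j ∣ m → ∑ i ∈ Λ j, ℓc i m = 0 := by
      intro j hj
      refine Finset.sum_eq_zero fun i hi => ?_
      have hcard : sVec j = Function.minimalPeriod σ i := by
        rw [hsVec]; exact orbit_card σ i (Λ j) (hΛorb j i hi)
      rw [hℓc i m]
      rw [show (∑ r ∈ m.divisors, ((ArithmeticFunction.moebius (m / r) : ℤ) : ℚ) * Lc i r)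
        = ∑ r ∈ m.divisors, ((ArithmeticFunction.moebius (m / r) : ℤ) : ℚ) from
        Finset.sum_congr rfl fun r hr => by
          have hr' : r ∣ m := (Nat.mem_divisors.mp hr).1
          have hne : (σ ^ r) i ≠ i := fun heq => hj (by
            rw [hcard]; exact ((perm_pow_fixed σ i r).mp heq).trans hr')
          rw [hLc1 i r hne, mul_one]]
      exact Z
    -- partition
    have hpart : ∑ i : Fin s, ℓc i m = ∑ j : Fin q, ∑ i ∈ Λ j, ℓc i m := by
      have huniv : (Finset.univ : Finset (Fin s)) = Finset.univ.biUnion Λ := by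
        ext i
        simp only [Finset.mem_univ, Finset.mem_biUnion, true_iff]
        obtain ⟨j, hj⟩ := hΛcover i
        exact ⟨j, by simp [hj]⟩
      rw [huniv, Finset.sum_biUnion]
      intro j _ j' _ hne
      exact hΛdisj j j' hne
    rw [hmain, hpart]
    refine Finset.sum_congr rfl fun j _ => ?_
    by_cases h : sVec j ∣ m
    · simp [h]
    · simp [h, hvan j h]
  · rw [hℓ]
    simp [hL 1]
end
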